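/- arXiv:1310.4429 — 3 statements merged into one kernel-verified Lean document; each statement's English description precedes it below -/
import Mathlib

section
/- If Z₁, Z₂ are independent standard normal random variables with CDF F_Z, and U₁ = F_Z(Z₁), U₂ = F_Z(ρZ₁ + √(1-ρ²)Z₂) for ρ ∈ (-1,1), then the Pearson correlation of U₁ and U₂ equals (6/π)·arcsin(ρ/2). -/
set_option maxHeartbeats 1000000
set_option linter.unusedSectionVars false

open MeasureTheory ProbabilityTheory Real Filter Set
open scoped ENNReal NNReal

noncomputable def phiR (x : ℝ) : ℝ := gaussianPDFReal 0 1 x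

noncomputable def PhiR (x : ℝ) : ℝ := ∫ z in Set.Iic x, gaussianPDFReal 0 1 z

lemma phiR_eq (x : ℝ) : phiR x = (Real.sqrt (2 * Real.pi))⁻¹ * Real.exp (-x ^ 2 / 2) := by
  simp [phiR, gaussianPDFReal]

lemma phiR_nonneg (x : ℝ) : 0 ≤ phiR x := gaussianPDFReal_nonneg 0 1 x

lemma phiR_le (x : ℝ) : phiR x ≤ (Real.sqrt (2 * Real.pi))⁻¹ := by
  rw [phiR_eq]
  have h1 : Real.exp (-x ^ 2 / 2) ≤ 1 := by
    rw [Real.exp_le_one_iff]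
    nlinarith [sq_nonneg x]
  have h2 : (0:ℝ) ≤ (Real.sqrt (2 * Real.pi))⁻¹ := by positivity
  nlinarith

lemma continuous_phiR : Continuous phiR := by
  have : phiR = fun x => (Real.sqrt (2 * Real.pi))⁻¹ * Real.exp (-x ^ 2 / 2) := funext phiR_eq
  rw [this]; fun_prop

lemma integrable_phiR : Integrable phiR := integrable_gaussianPDFReal 0 1

lemma integral_phiR : ∫ x, phiR x = 1 := integral_gaussianPDFReal_eq_one 0 one_ne_zero

lemma PhiR_eq_phiR (x : ℝ) : PhiR x = ∫ z in Set.Iic x, phiR z := rfl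

lemma PhiR_hasDerivAt (x : ℝ) : HasDerivAt PhiR (phiR x) x := by
  have h : ∀ y : ℝ, PhiR y = PhiR 0 + ∫ z in (0:ℝ)..y, phiR z := by
    intro y
    rw [PhiR_eq_phiR, PhiR_eq_phiR,
      ← intervalIntegral.integral_Iic_sub_Iic (integrable_phiR.integrableOn)
        (integrable_phiR.integrableOn)]
    ring
  have hd : HasDerivAt (fun y => PhiR 0 + ∫ z in (0:ℝ)..y, phiR z) (phiR x) x := by
    have := (intervalIntegral.integral_hasDerivAt_right
      (f := phiR) (intervalIntegrable_iff.mpr integrable_phiR.integrableOn)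
      (continuous_phiR.stronglyMeasurable.stronglyMeasurableAtFilter)
      continuous_phiR.continuousAt (a := 0) (b := x))
    exact this.const_add (PhiR 0)
  exact hd.congr_of_eventuallyEq (Filter.Eventually.of_forall h)

lemma continuous_PhiR : Continuous PhiR :=
  continuous_iff_continuousAt.mpr fun x => (PhiR_hasDerivAt x).continuousAt

lemma gaussianReal_Iic (t : ℝ) :
    gaussianReal 0 1 (Set.Iic t) = ENNReal.ofReal (PhiR t) := by
  rw [gaussianReal_apply_eq_integral 0 one_ne_zero, PhiR_eq_phiR]
  rfl

lemma PhiR_eq_cdf (x : ℝ) : PhiR x = cdf (gaussianReal 0 1) x := by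
  rw [cdf_eq_real, measureReal_def, gaussianReal_Iic, ENNReal.toReal_ofReal]
  exact setIntegral_nonneg measurableSet_Iic fun z _ => phiR_nonneg z

lemma PhiR_nonneg (x : ℝ) : 0 ≤ PhiR x := by
  rw [PhiR_eq_cdf]; exact cdf_nonneg _ x

lemma PhiR_le_one (x : ℝ) : PhiR x ≤ 1 := by
  rw [PhiR_eq_cdf]; exact cdf_le_one _ x

lemma PhiR_tendsto_atBot : Tendsto PhiR atBot (nhds 0) := by
  have h : PhiR = fun x => cdf (gaussianReal 0 1) x := funext PhiR_eq_cdf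
  rw [h]; exact tendsto_cdf_atBot _

lemma PhiR_tendsto_atTop : Tendsto PhiR atTop (nhds 1) := by
  have h : PhiR = fun x => cdf (gaussianReal 0 1) x := funext PhiR_eq_cdf
  rw [h]; exact tendsto_cdf_atTop _

lemma abs_PhiR_le_one (x : ℝ) : |PhiR x| ≤ 1 :=
  abs_le.2 ⟨by linarith [PhiR_nonneg x], PhiR_le_one x⟩

lemma PhiR_zero : PhiR 0 = 1/2 := by
  have hsplit : (∫ z in Set.Iic (0:ℝ), phiR z) + ∫ z in Set.Ioi (0:ℝ), phiR z = 1 := by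
    rw [← setIntegral_union (Set.Iic_disjoint_Ioi le_rfl) measurableSet_Ioi
      integrable_phiR.integrableOn integrable_phiR.integrableOn, Set.Iic_union_Ioi,
      setIntegral_univ, integral_phiR]
  have hsymm : (∫ z in Set.Iic (0:ℝ), phiR z) = ∫ z in Set.Ioi (0:ℝ), phiR z := by
    have h1 : (∫ z in Set.Iic (0:ℝ), phiR z) = ∫ z in Set.Iic (0:ℝ), phiR (-z) := by
      refine setIntegral_congr_fun measurableSet_Iic fun z _ => ?_
      rw [phiR_eq, phiR_eq]; ring_nf
    rw [h1, integral_comp_neg_Iic, neg_zero]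
  rw [PhiR_eq_phiR] at *
  linarith

lemma integral_gaussianReal_eq (g : ℝ → ℝ) :
    ∫ x, g x ∂(gaussianReal 0 1) = ∫ x, g x * phiR x := by
  rw [gaussianReal_of_var_ne_zero 0 one_ne_zero]
  have hd : (gaussianPDF 0 1) = fun x => ((phiR x).toNNReal : ℝ≥0∞) := by
    funext x
    rw [gaussianPDF, ENNReal.ofReal]
    rfl
  rw [hd]
  rw [integral_withDensity_eq_integral_smul
    (continuous_phiR.measurable.real_toNNReal) g]
  congr 1
  funext x
  rw [NNReal.smul_def, smul_eq_mul, Real.coe_toNNReal _ (phiR_nonneg x)]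
  ring

lemma integrable_PhiR_mul_phiR (c : ℝ) :
    Integrable (fun x => PhiR (c * x) * phiR x) := by
  refine Integrable.mono' integrable_phiR
    ((continuous_PhiR.comp (continuous_const.mul continuous_id)).mul continuous_phiR).aestronglyMeasurable
    (Filter.Eventually.of_forall fun x => ?_)
  rw [norm_mul, Real.norm_eq_abs, Real.norm_eq_abs, abs_of_nonneg (phiR_nonneg x)]
  calc |PhiR (c * x)| * phiR x ≤ 1 * phiR x := by
        exact mul_le_mul_of_nonneg_right (abs_PhiR_le_one _) (phiR_nonneg x)
    _ = phiR x := one_mul _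

lemma moment1 : ∫ x, PhiR x * phiR x = 1/2 := by
  have hderiv : ∀ x : ℝ, HasDerivAt (fun y => PhiR y ^ 2 / 2) (PhiR x * phiR x) x := by
    intro x
    have := ((PhiR_hasDerivAt x).pow 2).div_const 2
    refine this.congr_deriv ?_
    ring
  have hbot : Tendsto (fun y => PhiR y ^ 2 / 2) atBot (nhds 0) := by
    have := (PhiR_tendsto_atBot.pow 2).div_const 2
    simpa using this
  have htop : Tendsto (fun y => PhiR y ^ 2 / 2) atTop (nhds (1/2)) := by
    have := (PhiR_tendsto_atTop.pow 2).div_const 2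
    simpa using this
  have hint : Integrable (fun x => PhiR x * phiR x) := by
    simpa using integrable_PhiR_mul_phiR 1
  rw [integral_of_hasDerivAt_of_tendsto hderiv hint hbot htop]
  norm_num

lemma moment2 : ∫ x, PhiR x ^ 2 * phiR x = 1/3 := by
  have hderiv : ∀ x : ℝ, HasDerivAt (fun y => PhiR y ^ 3 / 3) (PhiR x ^ 2 * phiR x) x := by
    intro x
    have := ((PhiR_hasDerivAt x).pow 3).div_const 3
    refine this.congr_deriv ?_
    ring
  have hbot : Tendsto (fun y => PhiR y ^ 3 / 3) atBot (nhds 0) := by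
    have := (PhiR_tendsto_atBot.pow 3).div_const 3
    simpa using this
  have htop : Tendsto (fun y => PhiR y ^ 3 / 3) atTop (nhds (1/3)) := by
    have := (PhiR_tendsto_atTop.pow 3).div_const 3
    simpa using this
  have hint : Integrable (fun x => PhiR x ^ 2 * phiR x) := by
    refine Integrable.mono' integrable_phiR
      (((continuous_PhiR.pow 2).mul continuous_phiR)).aestronglyMeasurable
      (Filter.Eventually.of_forall fun x => ?_)
    rw [norm_mul, Real.norm_eq_abs, Real.norm_eq_abs, abs_of_nonneg (phiR_nonneg x)]
    calc |PhiR x ^ 2| * phiR x ≤ 1 * phiR x := by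
          refine mul_le_mul_of_nonneg_right ?_ (phiR_nonneg x)
          rw [abs_pow]
          exact pow_le_one₀ (abs_nonneg _) (abs_PhiR_le_one x)
      _ = phiR x := one_mul _
  rw [integral_of_hasDerivAt_of_tendsto hderiv hint hbot htop]
  norm_num

lemma eq_of_deriv_zero_atBot {g : ℝ → ℝ} (hg : ∀ x, HasDerivAt g 0 x)
    (h0 : Tendsto g atBot (nhds 0)) : ∀ x, g x = 0 := by
  intro x
  have hconst : ∀ y, g y = g x := fun y =>
    is_const_of_deriv_eq_zero (fun t => (hg t).differentiableAt)
      (fun t => (hg t).deriv) y x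
  have : Tendsto g atBot (nhds (g x)) := by
    have : g = fun _ => g x := funext hconst
    rw [this]; exact tendsto_const_nhds
  exact tendsto_nhds_unique this h0

lemma eq_of_deriv_zero_at_zero {g : ℝ → ℝ} (hg : ∀ x, HasDerivAt g 0 x)
    (h0 : g 0 = 0) : ∀ x, g x = 0 := by
  intro x
  have hconst := is_const_of_deriv_eq_zero (f := g) (fun t => (hg t).differentiableAt)
    (fun t => (hg t).deriv) x 0
  rw [hconst, h0]

lemma sqrt_two_pi_pos : 0 < Real.sqrt (2 * Real.pi) := Real.sqrt_pos.2 (by positivity)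

lemma integrable_PhiR_affine (a b : ℝ) :
    Integrable (fun x => PhiR (a + b * x) * phiR x) := by
  refine Integrable.mono' integrable_phiR
    ((continuous_PhiR.comp (continuous_const.add (continuous_const.mul continuous_id))).mul
      continuous_phiR).aestronglyMeasurable
    (Filter.Eventually.of_forall fun x => ?_)
  rw [norm_mul, Real.norm_eq_abs, Real.norm_eq_abs, abs_of_nonneg (phiR_nonneg x)]
  calc |PhiR (a + b * x)| * phiR x ≤ 1 * phiR x :=
        mul_le_mul_of_nonneg_right (abs_PhiR_le_one _) (phiR_nonneg x)
    _ = phiR x := one_mul _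

lemma integral_phiR_shift_mul (q c : ℝ) :
    ∫ x, phiR (c + q * x) * phiR x
      = (Real.sqrt (1 + q ^ 2))⁻¹ * phiR (c / Real.sqrt (1 + q ^ 2)) := by
  have hr : (0:ℝ) < 1 + q ^ 2 := by positivity
  have hrne : (1 + q ^ 2 : ℝ) ≠ 0 := ne_of_gt hr
  have hsr : (0:ℝ) < Real.sqrt (1 + q ^ 2) := Real.sqrt_pos.2 hr
  have key : ∀ x : ℝ, phiR (c + q * x) * phiR x
      = ((Real.sqrt (2 * Real.pi))⁻¹) ^ 2 * Real.exp (-c ^ 2 / (2 * (1 + q ^ 2)))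
        * Real.exp (-((1 + q ^ 2) / 2) * (x + q * c / (1 + q ^ 2)) ^ 2) := by
    intro x
    rw [phiR_eq (c + q * x), phiR_eq x]
    rw [show ((Real.sqrt (2 * Real.pi))⁻¹ * Real.exp (-(c + q * x) ^ 2 / 2))
        * ((Real.sqrt (2 * Real.pi))⁻¹ * Real.exp (-x ^ 2 / 2))
        = ((Real.sqrt (2 * Real.pi))⁻¹) ^ 2
          * (Real.exp (-(c + q * x) ^ 2 / 2) * Real.exp (-x ^ 2 / 2)) by ring]
    rw [← Real.exp_add, mul_assoc, ← Real.exp_add]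
    congr 2
    field_simp
    ring
  rw [integral_congr_ae (Filter.Eventually.of_forall key)]
  rw [MeasureTheory.integral_const_mul]
  have hshift : ∫ x : ℝ, Real.exp (-((1 + q ^ 2) / 2) * (x + q * c / (1 + q ^ 2)) ^ 2)
      = Real.sqrt (Real.pi / ((1 + q ^ 2) / 2)) := by
    rw [integral_add_right_eq_self (fun x : ℝ => Real.exp (-((1 + q ^ 2) / 2) * x ^ 2))
      (q * c / (1 + q ^ 2))]
    exact integral_gaussian _
  rw [hshift, phiR_eq]
  rw [div_pow c, Real.sq_sqrt hr.le]
  have h2 : Real.sqrt (Real.pi / ((1 + q ^ 2) / 2))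
      = Real.sqrt (2 * Real.pi) / Real.sqrt (1 + q ^ 2) := by
    rw [show Real.pi / ((1 + q ^ 2) / 2) = 2 * Real.pi / (1 + q ^ 2) by field_simp]
    exact Real.sqrt_div (by positivity) _
  rw [h2]
  have h3 : Real.exp (-c ^ 2 / (2 * (1 + q ^ 2))) = Real.exp (-(c ^ 2 / (1 + q ^ 2)) / 2) := by
    congr 1
    field_simp
  rw [h3]
  field_simp


lemma hasDerivAt_conv (q : ℝ) (c₀ : ℝ) :
    HasDerivAt (fun c => ∫ x, PhiR (c + q * x) * phiR x)
      ((Real.sqrt (1 + q ^ 2))⁻¹ * phiR (c₀ / Real.sqrt (1 + q ^ 2))) c₀ := by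
  have h := hasDerivAt_integral_of_dominated_loc_of_deriv_le (μ := volume)
    (F := fun c x => PhiR (c + q * x) * phiR x)
    (F' := fun c x => phiR (c + q * x) * phiR x)
    (x₀ := c₀) (s := Metric.ball c₀ 1) (bound := fun x => (Real.sqrt (2 * Real.pi))⁻¹ * phiR x)
    (Metric.ball_mem_nhds c₀ one_pos)
    (Filter.Eventually.of_forall fun c =>
      ((continuous_PhiR.comp (continuous_const.add (continuous_const.mul continuous_id))).mul
        continuous_phiR).aestronglyMeasurable)
    (integrable_PhiR_affine c₀ q)
    (((continuous_phiR.comp (continuous_const.add (continuous_const.mul continuous_id))).mul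
        continuous_phiR).aestronglyMeasurable)
    (Filter.Eventually.of_forall fun x => fun c _ => by
      rw [Real.norm_eq_abs, abs_mul, abs_of_nonneg (phiR_nonneg _), abs_of_nonneg (phiR_nonneg _)]
      exact mul_le_mul_of_nonneg_right (phiR_le _) (phiR_nonneg x))
    ((integrable_phiR.const_mul _))
    (Filter.Eventually.of_forall fun x => fun c _ => by
      have h1 : HasDerivAt (fun c : ℝ => c + q * x) 1 c := (hasDerivAt_id c).add_const (q * x)
      have h2 := ((PhiR_hasDerivAt (c + q * x)).comp c h1).mul_const (phiR x)
      refine h2.congr_deriv ?_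
      ring)
  rw [← integral_phiR_shift_mul q c₀]
  exact h.2

lemma conv_tendsto_atBot (q : ℝ) :
    Filter.Tendsto (fun c => ∫ x, PhiR (c + q * x) * phiR x) atBot (nhds 0) := by
  have := tendsto_integral_filter_of_dominated_convergence (μ := volume)
    (F := fun c x => PhiR (c + q * x) * phiR x) (f := fun _ => (0:ℝ))
    (bound := phiR) (l := atBot)
    (Filter.Eventually.of_forall fun c =>
      ((continuous_PhiR.comp (continuous_const.add (continuous_const.mul continuous_id))).mul
        continuous_phiR).aestronglyMeasurable)
    (Filter.Eventually.of_forall fun c => Filter.Eventually.of_forall fun x => by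
      rw [Real.norm_eq_abs, abs_mul, abs_of_nonneg (phiR_nonneg _)]
      calc |PhiR (c + q * x)| * phiR x ≤ 1 * phiR x :=
            mul_le_mul_of_nonneg_right (abs_PhiR_le_one _) (phiR_nonneg x)
        _ = phiR x := one_mul _)
    integrable_phiR
    (Filter.Eventually.of_forall fun x => by
      have h1 : Filter.Tendsto (fun c : ℝ => c + q * x) atBot atBot :=
        tendsto_atBot_add_const_right atBot (q * x) tendsto_id
      have h2 := (PhiR_tendsto_atBot.comp h1).mul_const (phiR x)
      simpa using h2)
  simpa using this

lemma conv_PhiR (q c : ℝ) :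
    ∫ x, PhiR (c + q * x) * phiR x = PhiR (c / Real.sqrt (1 + q ^ 2)) := by
  have hr : (0:ℝ) < 1 + q ^ 2 := by positivity
  have hsr : (0:ℝ) < Real.sqrt (1 + q ^ 2) := Real.sqrt_pos.2 hr
  set g : ℝ → ℝ := fun c => (∫ x, PhiR (c + q * x) * phiR x) - PhiR (c / Real.sqrt (1 + q ^ 2))
    with hg_def
  have hderiv : ∀ c, HasDerivAt g 0 c := by
    intro c
    have hB : HasDerivAt (fun c => PhiR (c / Real.sqrt (1 + q ^ 2)))
        (phiR (c / Real.sqrt (1 + q ^ 2)) * (1 / Real.sqrt (1 + q ^ 2))) c := by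
      have h1 : HasDerivAt (fun c : ℝ => c / Real.sqrt (1 + q ^ 2))
          (1 / Real.sqrt (1 + q ^ 2)) c := (hasDerivAt_id c).div_const _
      exact (PhiR_hasDerivAt _).comp c h1
    have := (hasDerivAt_conv q c).sub hB
    refine this.congr_deriv ?_
    field_simp
    ring
  have hbot : Filter.Tendsto g atBot (nhds 0) := by
    have h1 : Filter.Tendsto (fun c : ℝ => c / Real.sqrt (1 + q ^ 2)) atBot atBot :=
      tendsto_id.atBot_div_const hsr
    have h2 := PhiR_tendsto_atBot.comp h1
    have := (conv_tendsto_atBot q).sub h2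
    simpa [hg_def] using this
  have := eq_of_deriv_zero_atBot hderiv hbot c
  rw [hg_def] at this
  linarith [this]

lemma sq_sqrt_two_pi : ((Real.sqrt (2 * Real.pi))⁻¹) ^ 2 = (2 * Real.pi)⁻¹ := by
  rw [inv_pow, Real.sq_sqrt (by positivity)]

lemma abs_mul_exp_le (x : ℝ) : |x| * Real.exp (-x ^ 2 / 2) ≤ Real.exp (-(1/4) * x ^ 2) := by
  have h1 : |x| ≤ Real.exp (x ^ 2 / 4) := by
    have h2 : |x| ≤ x ^ 2 / 4 + 1 := by nlinarith [sq_abs x, sq_nonneg (|x| - 2)]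
    have h3 := Real.add_one_le_exp (x ^ 2 / 4)
    linarith
  calc |x| * Real.exp (-x ^ 2 / 2) ≤ Real.exp (x ^ 2 / 4) * Real.exp (-x ^ 2 / 2) :=
        mul_le_mul_of_nonneg_right h1 (Real.exp_pos _).le
    _ = Real.exp (-(1/4) * x ^ 2) := by rw [← Real.exp_add]; congr 1; ring

lemma exp_neg_k_le (k x : ℝ) (hk : 1 ≤ k) :
    Real.exp (-k * x ^ 2 / 2) ≤ Real.exp (-x ^ 2 / 2) := by
  apply Real.exp_le_exp.2
  nlinarith [sq_nonneg x]

lemma integrable_exp_quarter : Integrable (fun x : ℝ => Real.exp (-(1/4) * x ^ 2)) :=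
  integrable_exp_neg_mul_sq (by norm_num)

lemma tendsto_sq_atBot : Filter.Tendsto (fun x : ℝ => x ^ 2) atBot atTop := by
  have habs : Filter.Tendsto (fun x : ℝ => |x|) atBot atTop := tendsto_abs_atBot_atTop
  have := (tendsto_pow_atTop (n := 2) two_ne_zero).comp habs
  convert this using 1
  funext x; simp [sq_abs]

lemma tendsto_exp_neg_ksq {k : ℝ} (hk : 0 < k) {l : Filter ℝ}
    (hl : Filter.Tendsto (fun x : ℝ => x ^ 2) l atTop) :
    Filter.Tendsto (fun x : ℝ => Real.exp (-k * x ^ 2 / 2)) l (nhds 0) := by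
  have h2 := hl.const_mul_atTop_of_neg (by linarith : -k < 0)
  have h3 := h2.atBot_div_const (by norm_num : (0:ℝ) < 2)
  have h4 : Filter.Tendsto (fun x : ℝ => -k * x ^ 2 / 2) l atBot := h3
  exact Real.tendsto_exp_atBot.comp h4

lemma tendsto_G_zero {k : ℝ} (hk : 0 < k) {l : Filter ℝ}
    (hl : Filter.Tendsto (fun x : ℝ => x ^ 2) l atTop) :
    Filter.Tendsto (fun x : ℝ => -(2 * Real.pi)⁻¹ * k⁻¹ * (Real.exp (-k * x ^ 2 / 2) * PhiR x))
      l (nhds 0) := by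
  refine squeeze_zero_norm (a := fun x => (2 * Real.pi)⁻¹ * k⁻¹ * Real.exp (-k * x ^ 2 / 2))
    (fun x => ?_) ?_
  · have h1 : Real.exp (-k * x ^ 2 / 2) * |PhiR x| ≤ Real.exp (-k * x ^ 2 / 2) * 1 :=
      mul_le_mul_of_nonneg_left (abs_PhiR_le_one x) (Real.exp_pos _).le
    rw [Real.norm_eq_abs, abs_mul, abs_mul, abs_mul, abs_neg,
      abs_of_nonneg (by positivity : (0:ℝ) ≤ (2 * Real.pi)⁻¹),
      abs_of_nonneg (by positivity : (0:ℝ) ≤ k⁻¹),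
      abs_of_nonneg (Real.exp_pos _).le]
    calc (2 * Real.pi)⁻¹ * k⁻¹ * (Real.exp (-k * x ^ 2 / 2) * |PhiR x|)
        ≤ (2 * Real.pi)⁻¹ * k⁻¹ * (Real.exp (-k * x ^ 2 / 2) * 1) :=
          mul_le_mul_of_nonneg_left h1 (by positivity)
      _ = (2 * Real.pi)⁻¹ * k⁻¹ * Real.exp (-k * x ^ 2 / 2) := by rw [mul_one]
  · have := (tendsto_exp_neg_ksq hk hl).const_mul ((2 * Real.pi)⁻¹ * k⁻¹)
    simpa using this


lemma integral_J' (a : ℝ) :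
    ∫ x, PhiR x * (phiR (a * x) * x) * phiR x
      = (2 * Real.pi)⁻¹ * ((1 + a ^ 2) * Real.sqrt (a ^ 2 + 2))⁻¹ := by
  set k : ℝ := 1 + a ^ 2 with hk_def
  have hk : (0:ℝ) < k := by positivity
  have hk1 : (1:ℝ) ≤ k := by nlinarith [sq_nonneg a]
  -- exp part derivative
  have hexp : ∀ x : ℝ, HasDerivAt (fun x => Real.exp (-k * x ^ 2 / 2))
      (-k * x * Real.exp (-k * x ^ 2 / 2)) x := by
    intro x
    have hinner : HasDerivAt (fun x : ℝ => -k * x ^ 2 / 2) (-k * x) x := by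
      have := ((hasDerivAt_pow 2 x).const_mul (-k / 2))
      convert this using 1
      · rfl
      · rfl
      · funext y; ring
      · simp; ring
    have := (Real.hasDerivAt_exp (-k * x ^ 2 / 2)).comp x hinner
    refine this.congr_deriv ?_
    ring
  set G : ℝ → ℝ := fun x => -(2 * Real.pi)⁻¹ * k⁻¹ * (Real.exp (-k * x ^ 2 / 2) * PhiR x)
    with hG_def
  set g : ℝ → ℝ := fun x => (2 * Real.pi)⁻¹ * (x * Real.exp (-k * x ^ 2 / 2) * PhiR x)
      - (2 * Real.pi)⁻¹ * k⁻¹ * (Real.exp (-k * x ^ 2 / 2) * phiR x) with hg_def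
  have hGderiv : ∀ x, HasDerivAt G (g x) x := by
    intro x
    have h1 := ((hexp x).mul (PhiR_hasDerivAt x)).const_mul (-(2 * Real.pi)⁻¹ * k⁻¹)
    refine h1.congr_deriv ?_
    rw [hg_def]
    field_simp
    ring
  have hGbot : Filter.Tendsto G atBot (nhds 0) := by
    rw [hG_def]; exact tendsto_G_zero hk tendsto_sq_atBot
  have hGtop : Filter.Tendsto G atTop (nhds 0) := by
    rw [hG_def]; exact tendsto_G_zero hk (tendsto_pow_atTop two_ne_zero)
  have hint1 : Integrable (fun x => (2 * Real.pi)⁻¹ * (x * Real.exp (-k * x ^ 2 / 2) * PhiR x)) := by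
    refine Integrable.mono' (g := fun x => (2 * Real.pi)⁻¹ * Real.exp (-(1/4) * x ^ 2))
      (integrable_exp_quarter.const_mul _)
      ?_ (Filter.Eventually.of_forall fun x => ?_)
    · apply Continuous.aestronglyMeasurable
      apply continuous_const.mul
      apply Continuous.mul
      · apply continuous_id.mul
        apply Real.continuous_exp.comp
        fun_prop
      · exact continuous_PhiR
    · rw [norm_mul, Real.norm_eq_abs, Real.norm_eq_abs,
        abs_of_nonneg (by positivity : (0:ℝ) ≤ (2 * Real.pi)⁻¹)]
      refine mul_le_mul_of_nonneg_left ?_ (by positivity)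
      rw [abs_mul, abs_mul, abs_of_nonneg (Real.exp_pos _).le]
      calc |x| * Real.exp (-k * x ^ 2 / 2) * |PhiR x|
          ≤ |x| * Real.exp (-x ^ 2 / 2) * 1 :=
            mul_le_mul (mul_le_mul_of_nonneg_left (exp_neg_k_le k x hk1) (abs_nonneg x))
              (abs_PhiR_le_one x) (abs_nonneg _) (by positivity)
        _ = |x| * Real.exp (-x ^ 2 / 2) := mul_one _
        _ ≤ Real.exp (-(1/4) * x ^ 2) := abs_mul_exp_le x
  have hint2 : Integrable (fun x => (2 * Real.pi)⁻¹ * k⁻¹ * (Real.exp (-k * x ^ 2 / 2) * phiR x)) := by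
    refine Integrable.mono' (g := fun x => (2 * Real.pi)⁻¹ * k⁻¹ * phiR x)
      ((integrable_phiR.const_mul _))
      ?_ (Filter.Eventually.of_forall fun x => ?_)
    · apply Continuous.aestronglyMeasurable
      apply continuous_const.mul
      apply Continuous.mul ?_ continuous_phiR
      apply Real.continuous_exp.comp
      fun_prop
    · rw [norm_mul, Real.norm_eq_abs, Real.norm_eq_abs,
        abs_of_nonneg (by positivity : (0:ℝ) ≤ (2 * Real.pi)⁻¹ * k⁻¹)]
      refine mul_le_mul_of_nonneg_left ?_ (by positivity)
      rw [abs_mul, abs_of_nonneg (Real.exp_pos _).le, abs_of_nonneg (phiR_nonneg x)]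
      calc Real.exp (-k * x ^ 2 / 2) * phiR x ≤ 1 * phiR x := by
            refine mul_le_mul_of_nonneg_right ?_ (phiR_nonneg x)
            rw [Real.exp_le_one_iff]
            nlinarith [sq_nonneg x]
        _ = phiR x := one_mul _
  have hg_int : Integrable g := by
    rw [hg_def]
    exact hint1.sub hint2
  have hint_g_eq : ∫ x, g x = 0 := by
    rw [integral_of_hasDerivAt_of_tendsto hGderiv hg_int hGbot hGtop]
    ring
  -- rewrite integrand
  have hkey : ∀ x : ℝ, PhiR x * (phiR (a * x) * x) * phiR x
      = g x + (2 * Real.pi)⁻¹ * k⁻¹ * (Real.exp (-k * x ^ 2 / 2) * phiR x) := by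
    intro x
    have hprod : phiR (a * x) * phiR x = (2 * Real.pi)⁻¹ * Real.exp (-k * x ^ 2 / 2) := by
      rw [phiR_eq (a * x), phiR_eq x]
      rw [show ((Real.sqrt (2 * Real.pi))⁻¹ * Real.exp (-(a * x) ^ 2 / 2))
          * ((Real.sqrt (2 * Real.pi))⁻¹ * Real.exp (-x ^ 2 / 2))
          = ((Real.sqrt (2 * Real.pi))⁻¹) ^ 2
            * (Real.exp (-(a * x) ^ 2 / 2) * Real.exp (-x ^ 2 / 2)) by ring]
      rw [sq_sqrt_two_pi, ← Real.exp_add]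
      congr 1
      rw [hk_def]; ring
    have h2 : PhiR x * (phiR (a * x) * x) * phiR x
        = (phiR (a * x) * phiR x) * (x * PhiR x) := by ring
    rw [h2, hprod, hg_def]
    ring
  rw [integral_congr_ae (Filter.Eventually.of_forall hkey)]
  rw [integral_add hg_int (hint2)]
  rw [hint_g_eq, zero_add]
  rw [MeasureTheory.integral_const_mul]
  have hphi_exp : ∀ x : ℝ, Real.exp (-k * x ^ 2 / 2) * phiR x
      = (Real.sqrt (2 * Real.pi))⁻¹ * Real.exp (-((k + 1) / 2) * x ^ 2) := by
    intro x
    rw [phiR_eq, ← mul_assoc, mul_comm (Real.exp _) ((Real.sqrt (2 * Real.pi))⁻¹), mul_assoc,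
      ← Real.exp_add]
    congr 2
    ring
  rw [integral_congr_ae (Filter.Eventually.of_forall hphi_exp)]
  rw [MeasureTheory.integral_const_mul, integral_gaussian]
  have hsq : Real.sqrt (Real.pi / ((k + 1) / 2)) = Real.sqrt (2 * Real.pi) / Real.sqrt (k + 1) := by
    rw [show Real.pi / ((k + 1) / 2) = 2 * Real.pi / (k + 1) by field_simp]
    exact Real.sqrt_div (by positivity) _
  rw [hsq]
  have hk1eq : k + 1 = a ^ 2 + 2 := by rw [hk_def]; ring
  rw [hk1eq]
  have h0 : Real.sqrt (a ^ 2 + 2) ≠ 0 := by positivity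
  have h1 : Real.sqrt (2 * Real.pi) ≠ 0 := ne_of_gt sqrt_two_pi_pos
  field_simp

lemma integrable_J (a : ℝ) : Integrable (fun x => PhiR x * PhiR (a * x) * phiR x) := by
  refine Integrable.mono' integrable_phiR
    ((continuous_PhiR.mul (continuous_PhiR.comp (continuous_const.mul continuous_id))).mul
      continuous_phiR).aestronglyMeasurable
    (Filter.Eventually.of_forall fun x => ?_)
  rw [norm_mul, Real.norm_eq_abs, Real.norm_eq_abs, abs_of_nonneg (phiR_nonneg x), abs_mul]
  calc |PhiR x| * |PhiR (a * x)| * phiR x ≤ 1 * 1 * phiR x := by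
        refine mul_le_mul_of_nonneg_right ?_ (phiR_nonneg x)
        exact mul_le_mul (abs_PhiR_le_one x) (abs_PhiR_le_one _) (abs_nonneg _) zero_le_one
    _ = phiR x := by rw [one_mul, one_mul]

lemma hasDerivAt_J (a₀ : ℝ) :
    HasDerivAt (fun a => ∫ x, PhiR x * PhiR (a * x) * phiR x)
      ((2 * Real.pi)⁻¹ * ((1 + a₀ ^ 2) * Real.sqrt (a₀ ^ 2 + 2))⁻¹) a₀ := by
  have h := hasDerivAt_integral_of_dominated_loc_of_deriv_le (μ := volume)
    (F := fun a x => PhiR x * PhiR (a * x) * phiR x)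
    (F' := fun a x => PhiR x * (phiR (a * x) * x) * phiR x)
    (x₀ := a₀) (s := Metric.ball a₀ 1) (bound := fun x => (2 * Real.pi)⁻¹ * Real.exp (-(1/4) * x ^ 2))
    (Metric.ball_mem_nhds a₀ one_pos)
    (Filter.Eventually.of_forall fun a =>
      ((continuous_PhiR.mul (continuous_PhiR.comp (continuous_const.mul continuous_id))).mul
        continuous_phiR).aestronglyMeasurable)
    (integrable_J a₀)
    ((continuous_PhiR.mul ((continuous_phiR.comp (continuous_const.mul continuous_id)).mul
        continuous_id)).mul continuous_phiR).aestronglyMeasurable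
    (Filter.Eventually.of_forall fun x => fun a _ => by
      rw [Real.norm_eq_abs, abs_mul, abs_mul, abs_mul,
        abs_of_nonneg (phiR_nonneg (a * x)), abs_of_nonneg (phiR_nonneg x)]
      rw [phiR_eq x]
      have h1 : |PhiR x| * (phiR (a * x) * |x|) ≤ 1 * ((Real.sqrt (2 * Real.pi))⁻¹ * |x|) := by
        refine mul_le_mul (abs_PhiR_le_one x) ?_ (mul_nonneg (phiR_nonneg _) (abs_nonneg _)) zero_le_one
        exact mul_le_mul_of_nonneg_right (phiR_le _) (abs_nonneg x)
      calc |PhiR x| * (phiR (a * x) * |x|) * ((Real.sqrt (2 * Real.pi))⁻¹ * Real.exp (-x ^ 2 / 2))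
          ≤ 1 * ((Real.sqrt (2 * Real.pi))⁻¹ * |x|)
            * ((Real.sqrt (2 * Real.pi))⁻¹ * Real.exp (-x ^ 2 / 2)) :=
            mul_le_mul_of_nonneg_right h1 (by positivity)
        _ = ((Real.sqrt (2 * Real.pi))⁻¹) ^ 2 * (|x| * Real.exp (-x ^ 2 / 2)) := by ring
        _ ≤ ((Real.sqrt (2 * Real.pi))⁻¹) ^ 2 * Real.exp (-(1/4) * x ^ 2) :=
            mul_le_mul_of_nonneg_left (abs_mul_exp_le x) (by positivity)
        _ = (2 * Real.pi)⁻¹ * Real.exp (-(1/4) * x ^ 2) := by rw [sq_sqrt_two_pi])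
    (integrable_exp_quarter.const_mul _)
    (Filter.Eventually.of_forall fun x => fun a _ => by
      have h1 : HasDerivAt (fun a : ℝ => a * x) x a := hasDerivAt_mul_const x
      have h2 := (((PhiR_hasDerivAt (a * x)).comp a h1).const_mul (PhiR x)).mul_const (phiR x)
      exact h2)
  rw [← integral_J' a₀]
  exact h.2

lemma hasDerivAt_H (a : ℝ) :
    HasDerivAt (fun a => 1/4 + Real.arctan (a / Real.sqrt (a ^ 2 + 2)) / (2 * Real.pi))
      ((2 * Real.pi)⁻¹ * ((1 + a ^ 2) * Real.sqrt (a ^ 2 + 2))⁻¹) a := by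
  have hpos : (0:ℝ) < a ^ 2 + 2 := by positivity
  have hspos : (0:ℝ) < Real.sqrt (a ^ 2 + 2) := Real.sqrt_pos.2 hpos
  have hsne : Real.sqrt (a ^ 2 + 2) ≠ 0 := ne_of_gt hspos
  have hsq : Real.sqrt (a ^ 2 + 2) ^ 2 = a ^ 2 + 2 := Real.sq_sqrt hpos.le
  have hs : HasDerivAt (fun a : ℝ => Real.sqrt (a ^ 2 + 2)) (a / Real.sqrt (a ^ 2 + 2)) a := by
    have hinner : HasDerivAt (fun a : ℝ => a ^ 2 + 2) (2 * a) a := by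
      have := (hasDerivAt_pow 2 a).add_const 2
      refine this.congr_deriv ?_
      simp
    have := (Real.hasDerivAt_sqrt (ne_of_gt hpos)).comp a hinner
    refine this.congr_deriv ?_
    field_simp
  have hu : HasDerivAt (fun a : ℝ => a / Real.sqrt (a ^ 2 + 2))
      (2 / ((a ^ 2 + 2) * Real.sqrt (a ^ 2 + 2))) a := by
    have := (hasDerivAt_id a).div hs hsne
    refine this.congr_deriv ?_
    rw [hsq]
    field_simp
    simp only [id_eq]
    rw [hsq]
    ring
  have harct := hu.arctan
  have h2 := (harct.div_const (2 * Real.pi)).const_add (1/4 : ℝ)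
  refine h2.congr_deriv ?_
  have hu2 : 1 + (a / Real.sqrt (a ^ 2 + 2)) ^ 2 = 2 * (1 + a ^ 2) / (a ^ 2 + 2) := by
    rw [div_pow, hsq]
    field_simp
    ring
  rw [hu2]
  have h1a : (0:ℝ) < 1 + a ^ 2 := by positivity
  field_simp

lemma J_eq (a : ℝ) :
    ∫ x, PhiR x * PhiR (a * x) * phiR x
      = 1/4 + Real.arctan (a / Real.sqrt (a ^ 2 + 2)) / (2 * Real.pi) := by
  set g : ℝ → ℝ := fun a => (∫ x, PhiR x * PhiR (a * x) * phiR x)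
    - (1/4 + Real.arctan (a / Real.sqrt (a ^ 2 + 2)) / (2 * Real.pi)) with hg_def
  have hderiv : ∀ a, HasDerivAt g 0 a := by
    intro a
    have h := (hasDerivAt_J a).sub (hasDerivAt_H a)
    rw [hg_def]
    refine h.congr_deriv ?_
    ring
  have h0 : g 0 = 0 := by
    rw [hg_def]
    simp only
    have h1 : ∀ x : ℝ, PhiR x * PhiR ((0:ℝ) * x) * phiR x = (1/2) * (PhiR x * phiR x) := by
      intro x
      rw [zero_mul, PhiR_zero]
      ring
    rw [integral_congr_ae (Filter.Eventually.of_forall h1), MeasureTheory.integral_const_mul,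
      moment1]
    norm_num
  have := eq_of_deriv_zero_at_zero hderiv h0 a
  rw [hg_def] at this
  linarith [this]

section Prob

variable {Ω : Type*} [MeasureSpace Ω] [IsProbabilityMeasure (ℙ : Measure Ω)]

lemma expectation_PhiR {X : Ω → ℝ} (hm : Measurable X)
    (hX : Measure.map X ℙ = gaussianReal 0 1) :
    ∫ ω, PhiR (X ω) ∂ℙ = 1/2 := by
  rw [← integral_map hm.aemeasurable continuous_PhiR.aestronglyMeasurable, hX,
    integral_gaussianReal_eq, moment1]

lemma expectation_PhiR_sq {X : Ω → ℝ} (hm : Measurable X)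
    (hX : Measure.map X ℙ = gaussianReal 0 1) :
    ∫ ω, PhiR (X ω) ^ 2 ∂ℙ = 1/3 := by
  rw [← integral_map (f := fun x => PhiR x ^ 2) hm.aemeasurable (continuous_PhiR.pow 2).aestronglyMeasurable, hX,
    integral_gaussianReal_eq, moment2]

theorem W_law {Z₁ Z₂ : Ω → ℝ} (hm1 : Measurable Z₁) (hm2 : Measurable Z₂)
    (h1 : Measure.map Z₁ ℙ = gaussianReal 0 1)
    (h2 : Measure.map Z₂ ℙ = gaussianReal 0 1)
    (hind : IndepFun Z₁ Z₂ ℙ) {ρ : ℝ} (hρ : ρ ∈ Set.Ioo (-1:ℝ) 1) :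
    Measure.map (fun ω => ρ * Z₁ ω + Real.sqrt (1 - ρ ^ 2) * Z₂ ω) ℙ = gaussianReal 0 1 := by
  set s : ℝ := Real.sqrt (1 - ρ ^ 2) with hs_def
  have hρ2 : ρ ^ 2 < 1 := by
    rw [sq_lt_one_iff_abs_lt_one, abs_lt]
    exact ⟨hρ.1, hρ.2⟩
  have hspos : (0:ℝ) < s := Real.sqrt_pos.2 (by linarith)
  have hs2 : s ^ 2 = 1 - ρ ^ 2 := Real.sq_sqrt (by linarith)
  have hjoint : Measure.map (fun ω => (Z₁ ω, Z₂ ω)) ℙ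
      = (gaussianReal 0 1).prod (gaussianReal 0 1) := by
    exact ((indepFun_iff_map_prod_eq_prod_map_map hm1.aemeasurable hm2.aemeasurable).mp
      hind).trans (by rw [h1, h2])
  have hg : Measurable (fun p : ℝ × ℝ => ρ * p.1 + s * p.2) := by fun_prop
  have hmap : Measure.map (fun ω => ρ * Z₁ ω + s * Z₂ ω) ℙ
      = Measure.map (fun p : ℝ × ℝ => ρ * p.1 + s * p.2)
          ((gaussianReal 0 1).prod (gaussianReal 0 1)) := by
    rw [← hjoint, Measure.map_map hg (hm1.prodMk hm2)]
    rfl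
  rw [hmap]
  have hPM : IsProbabilityMeasure (Measure.map (fun p : ℝ × ℝ => ρ * p.1 + s * p.2)
      ((gaussianReal 0 1).prod (gaussianReal 0 1))) :=
    Measure.isProbabilityMeasure_map hg.aemeasurable
  refine Measure.ext_of_Iic _ _ (fun t => ?_)
  rw [Measure.map_apply hg measurableSet_Iic]
  have hset : (fun p : ℝ × ℝ => ρ * p.1 + s * p.2) ⁻¹' (Set.Iic t)
      = {p : ℝ × ℝ | p.2 ∈ Set.Iic ((t - ρ * p.1) / s)} := by
    ext p
    simp only [Set.mem_preimage, Set.mem_Iic, Set.mem_setOf_eq]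
    rw [le_div_iff₀ hspos]
    constructor <;> intro h <;> nlinarith
  have hms : MeasurableSet {p : ℝ × ℝ | p.2 ∈ Set.Iic ((t - ρ * p.1) / s)} := by
    rw [← hset]; exact hg measurableSet_Iic
  rw [hset, Measure.prod_apply hms]
  have hsec : ∀ x : ℝ, (Prod.mk x ⁻¹' {p : ℝ × ℝ | p.2 ∈ Set.Iic ((t - ρ * p.1) / s)})
      = Set.Iic ((t - ρ * x) / s) := by
    intro x
    ext y
    simp
  have hlin : ∀ x : ℝ, gaussianReal 0 1 (Prod.mk x ⁻¹' {p : ℝ × ℝ | p.2 ∈ Set.Iic ((t - ρ * p.1) / s)})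
      = ENNReal.ofReal (PhiR ((t - ρ * x) / s)) := by
    intro x
    rw [hsec x, gaussianReal_Iic]
  rw [lintegral_congr hlin]
  have hint : Integrable (fun x => PhiR ((t - ρ * x) / s)) (gaussianReal 0 1) := by
    refine Integrable.mono' (integrable_const 1)
      (continuous_PhiR.comp (by fun_prop : Continuous (fun x : ℝ => (t - ρ * x) / s))).aestronglyMeasurable
      (Filter.Eventually.of_forall fun x => ?_)
    rw [Real.norm_eq_abs]
    exact abs_PhiR_le_one _
  rw [← MeasureTheory.ofReal_integral_eq_lintegral_ofReal hint
    (Filter.Eventually.of_forall fun x => PhiR_nonneg _)]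
  have hval : ∫ x, PhiR ((t - ρ * x) / s) ∂(gaussianReal 0 1) = PhiR t := by
    rw [integral_gaussianReal_eq]
    have hco : ∀ x : ℝ, PhiR ((t - ρ * x) / s) = PhiR (t/s + (-ρ/s) * x) := by
      intro x
      congr 1
      field_simp
      ring
    rw [integral_congr_ae (Filter.Eventually.of_forall fun x => by rw [hco x])]
    rw [conv_PhiR]
    congr 1
    have hτ : Real.sqrt (1 + (-ρ/s) ^ 2) = 1/s := by
      have h : 1 + (-ρ/s) ^ 2 = (1/s) ^ 2 := by
        field_simp
        linarith [hs2]
      rw [h, Real.sqrt_sq (by positivity)]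
    rw [hτ]
    field_simp
  rw [hval, gaussianReal_Iic]

end Prob

section Prob2
variable {Ω : Type*} [MeasureSpace Ω] [IsProbabilityMeasure (ℙ : Measure Ω)]

theorem cross_moment {Z₁ Z₂ : Ω → ℝ} (hm1 : Measurable Z₁) (hm2 : Measurable Z₂)
    (h1 : Measure.map Z₁ ℙ = gaussianReal 0 1)
    (h2 : Measure.map Z₂ ℙ = gaussianReal 0 1)
    (hind : IndepFun Z₁ Z₂ ℙ) {ρ : ℝ} (hρ : ρ ∈ Set.Ioo (-1:ℝ) 1) :
    ∫ ω, PhiR (Z₁ ω) * PhiR (ρ * Z₁ ω + Real.sqrt (1 - ρ ^ 2) * Z₂ ω) ∂ℙ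
      = 1/4 + Real.arcsin (ρ / 2) / (2 * Real.pi) := by
  set s : ℝ := Real.sqrt (1 - ρ ^ 2) with hs_def
  have hρ2 : ρ ^ 2 < 1 := by
    rw [sq_lt_one_iff_abs_lt_one, abs_lt]
    exact ⟨hρ.1, hρ.2⟩
  have hspos : (0:ℝ) < s := Real.sqrt_pos.2 (by linarith)
  have hs2 : s ^ 2 = 1 - ρ ^ 2 := Real.sq_sqrt (by linarith)
  have hjoint : Measure.map (fun ω => (Z₁ ω, Z₂ ω)) ℙ
      = (gaussianReal 0 1).prod (gaussianReal 0 1) := by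
    exact ((indepFun_iff_map_prod_eq_prod_map_map hm1.aemeasurable hm2.aemeasurable).mp
      hind).trans (by rw [h1, h2])
  have hf : Continuous (fun p : ℝ × ℝ => PhiR p.1 * PhiR (ρ * p.1 + s * p.2)) := by
    apply Continuous.mul
    · exact continuous_PhiR.comp continuous_fst
    · exact continuous_PhiR.comp (by fun_prop)
  have hstep : ∫ ω, PhiR (Z₁ ω) * PhiR (ρ * Z₁ ω + s * Z₂ ω) ∂ℙ
      = ∫ p : ℝ × ℝ, PhiR p.1 * PhiR (ρ * p.1 + s * p.2)
          ∂((gaussianReal 0 1).prod (gaussianReal 0 1)) := by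
    rw [← hjoint, integral_map (hm1.prodMk hm2).aemeasurable hf.aestronglyMeasurable]
  rw [hstep]
  have hint : Integrable (fun p : ℝ × ℝ => PhiR p.1 * PhiR (ρ * p.1 + s * p.2))
      ((gaussianReal 0 1).prod (gaussianReal 0 1)) := by
    refine Integrable.mono' (integrable_const 1) hf.aestronglyMeasurable
      (Filter.Eventually.of_forall fun p => ?_)
    rw [Real.norm_eq_abs, abs_mul]
    calc |PhiR p.1| * |PhiR (ρ * p.1 + s * p.2)| ≤ 1 * 1 :=
          mul_le_mul (abs_PhiR_le_one _) (abs_PhiR_le_one _) (abs_nonneg _) zero_le_one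
      _ = 1 := one_mul 1
  rw [MeasureTheory.integral_prod _ hint]
  set τ : ℝ := Real.sqrt (1 + s ^ 2) with hτ_def
  have hτpos : (0:ℝ) < τ := Real.sqrt_pos.2 (by positivity)
  have hτ2 : τ ^ 2 = 2 - ρ ^ 2 := by
    rw [hτ_def, Real.sq_sqrt (by positivity), hs2]; ring
  have hinner : ∀ x : ℝ, ∫ y, PhiR x * PhiR (ρ * x + s * y) ∂(gaussianReal 0 1)
      = PhiR x * PhiR ((ρ / τ) * x) := by
    intro x
    rw [MeasureTheory.integral_const_mul]
    congr 1
    rw [integral_gaussianReal_eq, conv_PhiR s (ρ * x)]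
    congr 1
    rw [← hτ_def]
    field_simp
  rw [integral_congr_ae (Filter.Eventually.of_forall hinner)]
  have houter : ∫ x, PhiR x * PhiR ((ρ / τ) * x) ∂(gaussianReal 0 1)
      = 1/4 + Real.arctan ((ρ / τ) / Real.sqrt ((ρ / τ) ^ 2 + 2)) / (2 * Real.pi) := by
    rw [integral_gaussianReal_eq, J_eq]
  rw [houter]
  congr 2
  -- arctan((ρ/τ)/√((ρ/τ)²+2)) = arcsin(ρ/2)
  have h42 : (0:ℝ) < 4 - ρ ^ 2 := by nlinarith
  have hcs : Real.sqrt ((ρ / τ) ^ 2 + 2) = Real.sqrt (4 - ρ ^ 2) / τ := by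
    rw [show (ρ / τ) ^ 2 + 2 = (4 - ρ ^ 2) / τ ^ 2 by
      field_simp
      nlinarith [hτ2]]
    rw [Real.sqrt_div h42.le, Real.sqrt_sq hτpos.le]
  have harg : (ρ / τ) / Real.sqrt ((ρ / τ) ^ 2 + 2) = ρ / Real.sqrt (4 - ρ ^ 2) := by
    rw [hcs]
    have h4pos : (0:ℝ) < Real.sqrt (4 - ρ ^ 2) := Real.sqrt_pos.2 h42
    field_simp
  rw [harg]
  have hmem : ρ / 2 ∈ Set.Ioo (-(1:ℝ)) 1 := by
    constructor <;> [linarith [hρ.1]; linarith [hρ.2]]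
  rw [Real.arcsin_eq_arctan hmem]
  congr 1
  have h14 : Real.sqrt (1 - (ρ / 2) ^ 2) = Real.sqrt (4 - ρ ^ 2) / 2 := by
    rw [show 1 - (ρ / 2) ^ 2 = (4 - ρ ^ 2) / 2 ^ 2 by ring]
    rw [Real.sqrt_div h42.le, Real.sqrt_sq (by norm_num)]
  rw [h14]
  have h4pos : (0:ℝ) < Real.sqrt (4 - ρ ^ 2) := Real.sqrt_pos.2 h42
  field_simp

end Prob2

/-- The Pearson correlation of Gaussian-copula uniforms is (6/π)·arcsin(ρ/2). -/
theorem stmt16 {Ω : Type*} [MeasureSpace Ω] [IsProbabilityMeasure (ℙ : Measure Ω)]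
    (Z₁ Z₂ : Ω → ℝ) (hm1 : Measurable Z₁) (hm2 : Measurable Z₂)
    (h1 : Measure.map Z₁ ℙ = gaussianReal 0 1)
    (h2 : Measure.map Z₂ ℙ = gaussianReal 0 1)
    (hind : IndepFun Z₁ Z₂ ℙ) (ρ : ℝ) (hρ : ρ ∈ Set.Ioo (-1:ℝ) 1)
    (Φ : ℝ → ℝ) (hΦ : ∀ x, Φ x = ∫ z in Set.Iic x, gaussianPDFReal 0 1 z)
    (U₁ U₂ : Ω → ℝ) (hU₁ : ∀ ω, U₁ ω = Φ (Z₁ ω))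
    (hU₂ : ∀ ω, U₂ ω = Φ (ρ * Z₁ ω + Real.sqrt (1 - ρ ^ 2) * Z₂ ω)) :
    ((∫ ω, U₁ ω * U₂ ω ∂ℙ) - (∫ ω, U₁ ω ∂ℙ) * (∫ ω, U₂ ω ∂ℙ)) /
      Real.sqrt (((∫ ω, (U₁ ω) ^ 2 ∂ℙ) - (∫ ω, U₁ ω ∂ℙ) ^ 2) *
        ((∫ ω, (U₂ ω) ^ 2 ∂ℙ) - (∫ ω, U₂ ω ∂ℙ) ^ 2))
      = (6 / Real.pi) * Real.arcsin (ρ / 2) := by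
  have hΦP : Φ = PhiR := funext fun x => hΦ x
  set s : ℝ := Real.sqrt (1 - ρ ^ 2) with hs_def
  have hmW : Measurable (fun ω => ρ * Z₁ ω + s * Z₂ ω) :=
    ((measurable_const.mul hm1).add (measurable_const.mul hm2))
  have hWlaw := W_law hm1 hm2 h1 h2 hind hρ
  have hE1 : ∫ ω, U₁ ω ∂ℙ = 1/2 := by
    rw [integral_congr_ae (Filter.Eventually.of_forall fun ω => by rw [hU₁ ω, hΦP])]
    exact expectation_PhiR hm1 h1
  have hE1sq : ∫ ω, (U₁ ω) ^ 2 ∂ℙ = 1/3 := by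
    rw [integral_congr_ae (Filter.Eventually.of_forall fun ω => by rw [hU₁ ω, hΦP])]
    exact expectation_PhiR_sq hm1 h1
  have hE2 : ∫ ω, U₂ ω ∂ℙ = 1/2 := by
    rw [integral_congr_ae (Filter.Eventually.of_forall fun ω => by rw [hU₂ ω, hΦP])]
    exact expectation_PhiR hmW hWlaw
  have hE2sq : ∫ ω, (U₂ ω) ^ 2 ∂ℙ = 1/3 := by
    rw [integral_congr_ae (Filter.Eventually.of_forall fun ω => by rw [hU₂ ω, hΦP])]
    exact expectation_PhiR_sq hmW hWlaw
  have hE12 : ∫ ω, U₁ ω * U₂ ω ∂ℙ = 1/4 + Real.arcsin (ρ / 2) / (2 * Real.pi) := by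
    rw [integral_congr_ae (Filter.Eventually.of_forall fun ω => by rw [hU₁ ω, hU₂ ω, hΦP])]
    exact cross_moment hm1 hm2 h1 h2 hind hρ
  rw [hE1, hE1sq, hE2, hE2sq, hE12]
  have hden : Real.sqrt ((1/3 - (1/2 : ℝ) ^ 2) * (1/3 - (1/2 : ℝ) ^ 2)) = 1/12 := by
    rw [show (1/3 - (1/2 : ℝ) ^ 2) * (1/3 - (1/2 : ℝ) ^ 2) = (1/12 : ℝ) ^ 2 by norm_num,
      Real.sqrt_sq (by norm_num)]
  rw [hden]
  have hπ : Real.pi ≠ 0 := Real.pi_ne_zero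
  field_simp
  ring
end

section
/- For u₁, u₂ ∈ (0,1), the limit as ρ → 1⁻ of ∫₀^{u₁} F_Z((F_Z⁻¹(u₂) - ρ·F_Z⁻¹(v))/√(1-ρ²)) dv equals min(u₁, u₂). -/
open MeasureTheory

/-- As ρ → 1⁻ the Gaussian-copula joint CDF tends to the comonotone copula. -/
theorem stmt18 (φ Φ : ℝ → ℝ)
    (hφ : ∀ z, φ z = (1 / Real.sqrt (2 * Real.pi)) * Real.exp (-z ^ 2 / 2))
    (hΦ : ∀ x, Φ x = ∫ z in Set.Iic x, φ z)
    (u₁ u₂ : ℝ) (h1 : u₁ ∈ Set.Ioo (0:ℝ) 1) (h2 : u₂ ∈ Set.Ioo (0:ℝ) 1) :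
    Filter.Tendsto
      (fun ρ : ℝ => ∫ v in Set.Ioo (0:ℝ) u₁,
        Φ ((Function.invFun Φ u₂ - ρ * Function.invFun Φ v) / Real.sqrt (1 - ρ ^ 2)))
      (nhdsWithin 1 (Set.Iio 1)) (nhds (min u₁ u₂)) := by
  classical
  have hπ : (0:ℝ) < Real.sqrt (2 * Real.pi) := Real.sqrt_pos.2 (by positivity)
  have hφ0 : ∀ z, φ z = (1 / Real.sqrt (2 * Real.pi)) * Real.exp (-(1/2) * z ^ 2) := by
    intro z; rw [hφ]; ring_nf
  have hφpos : ∀ z, 0 < φ z := by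
    intro z; rw [hφ0]; positivity
  have hφcont : Continuous φ := by
    have : Continuous fun z : ℝ => (1 / Real.sqrt (2 * Real.pi)) * Real.exp (-(1/2) * z ^ 2) := by
      fun_prop
    exact this.congr fun z => (hφ0 z).symm
  have hint : Integrable φ := by
    have h2 := (integrable_exp_neg_mul_sq (show (0:ℝ) < 1/2 by norm_num)).const_mul
      (1 / Real.sqrt (2 * Real.pi))
    exact h2.congr (Filter.Eventually.of_forall fun z => (hφ0 z).symm)
  have htotal : ∫ z, φ z = 1 := by
    have : ∫ z, φ z = (1 / Real.sqrt (2 * Real.pi)) * ∫ z, Real.exp (-(1/2) * z ^ 2) := by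
      simp_rw [hφ0]; exact integral_const_mul _ _
    rw [this, integral_gaussian]
    have : Real.pi / (1/2 : ℝ) = 2 * Real.pi := by ring
    rw [this]
    field_simp
  have key : ∀ a b : ℝ, Φ b - Φ a = ∫ x in a..b, φ x := by
    intro a b
    rw [hΦ, hΦ]
    exact intervalIntegral.integral_Iic_sub_Iic hint.integrableOn hint.integrableOn
  have hderiv : ∀ x, HasDerivAt Φ (φ x) x := by
    intro x
    have hrepr : Φ = fun y => Φ 0 + ∫ t in (0:ℝ)..y, φ t := by
      funext y
      have := key 0 y
      linarith
    rw [hrepr]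
    exact (intervalIntegral.integral_hasDerivAt_right
      hint.intervalIntegrable
      hφcont.aestronglyMeasurable.stronglyMeasurableAtFilter
      hφcont.continuousAt).const_add _
  have hcont : Continuous Φ := by
    rw [continuous_iff_continuousAt]
    exact fun x => (hderiv x).continuousAt
  have hmono : StrictMono Φ :=
    strictMono_of_deriv_pos fun x => by rw [(hderiv x).deriv]; exact hφpos x
  have htop : Filter.Tendsto Φ Filter.atTop (nhds 1) := by
    have h := (MeasureTheory.aecover_Iic (μ := volume) (l := Filter.atTop)
      Filter.tendsto_id).integral_tendsto_of_countably_generated hint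
    rw [htotal] at h
    exact h.congr fun x => (hΦ x).symm
  have hbot : Filter.Tendsto Φ Filter.atBot (nhds 0) := by
    have h := intervalIntegral_tendsto_integral_Iic (μ := volume) (0:ℝ)
      hint.integrableOn (Filter.tendsto_id (α := ℝ) (x := Filter.atBot))
    have h2 : Filter.Tendsto (fun x : ℝ => Φ 0 - ∫ t in x..(0:ℝ), φ t) Filter.atBot
        (nhds (Φ 0 - ∫ t in Set.Iic (0:ℝ), φ t)) := Filter.Tendsto.sub tendsto_const_nhds h
    rw [← hΦ 0, sub_self] at h2
    exact h2.congr fun x => by rw [← key x 0]; ring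
  have hΦ01 : ∀ x, Φ x ∈ Set.Icc (0:ℝ) 1 := by
    intro x
    constructor
    · rw [hΦ]
      exact setIntegral_nonneg measurableSet_Iic fun z _ => (hφpos z).le
    · exact hmono.monotone.ge_of_tendsto htop x
  have hrange : ∀ u ∈ Set.Ioo (0:ℝ) 1, ∃ x, Φ x = u := by
    rintro u ⟨hu0, hu1⟩
    obtain ⟨b, hb⟩ := (htop.eventually (lt_mem_nhds hu1)).exists
    obtain ⟨a, ha, hab⟩ :=
      ((hbot.eventually (gt_mem_nhds hu0)).and (Filter.eventually_lt_atBot b)).exists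
    obtain ⟨x, _, hx⟩ := intermediate_value_Ioo hab.le hcont.continuousOn ⟨ha, hb⟩
    exact ⟨x, hx⟩
  have hinv : ∀ u ∈ Set.Ioo (0:ℝ) 1, Φ (Function.invFun Φ u) = u := fun u hu =>
    Function.invFun_eq (hrange u hu)
  set a := Function.invFun Φ u₂ with ha_def
  set g := Function.invFun Φ with hg_def
  have hΦa : Φ a = u₂ := hinv u₂ h2
  have hsub : Set.Ioo (0:ℝ) u₁ ⊆ Set.Ioo (0:ℝ) 1 := fun x hx => ⟨hx.1, hx.2.trans h1.2⟩
  have hgmono : MonotoneOn g (Set.Ioo (0:ℝ) u₁) := by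
    intro x hx y hy hxy
    have hgx : Φ (g x) = x := hinv x (hsub hx)
    have hgy : Φ (g y) = y := hinv y (hsub hy)
    exact hmono.le_iff_le.mp (by rw [hgx, hgy]; exact hxy)
  have hg_ae : AEMeasurable g (volume.restrict (Set.Ioo (0:ℝ) u₁)) :=
    aemeasurable_restrict_of_monotoneOn measurableSet_Ioo hgmono
  -- eventually ρ ∈ Ioo (-1) 1
  have hev : ∀ᶠ ρ in nhdsWithin 1 (Set.Iio 1), ρ ∈ Set.Ioo (-1:ℝ) 1 := by
    have h1' : ∀ᶠ ρ in nhdsWithin 1 (Set.Iio 1), (-1:ℝ) < ρ :=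
      Filter.Eventually.filter_mono nhdsWithin_le_nhds
        (eventually_gt_nhds (by norm_num))
    have h2' : ∀ᶠ ρ : ℝ in nhdsWithin 1 (Set.Iio 1), ρ < 1 :=
      eventually_mem_nhdsWithin.mono fun x hx => hx
    filter_upwards [h1', h2'] with ρ hρ1 hρ2 using ⟨hρ1, hρ2⟩
  -- denominator inverse tendsto atTop
  have hden : Filter.Tendsto (fun ρ : ℝ => (Real.sqrt (1 - ρ ^ 2))⁻¹)
      (nhdsWithin 1 (Set.Iio 1)) Filter.atTop := by
    refine Filter.Tendsto.inv_tendsto_nhdsGT_zero ?_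
    refine tendsto_nhdsWithin_of_tendsto_nhds_of_eventually_within _ ?_ ?_
    · have : Filter.Tendsto (fun ρ : ℝ => Real.sqrt (1 - ρ ^ 2)) (nhds 1)
          (nhds (Real.sqrt (1 - 1 ^ 2))) :=
        Continuous.tendsto (by fun_prop : Continuous fun ρ : ℝ => Real.sqrt (1 - ρ ^ 2)) 1
      simpa using this.mono_left nhdsWithin_le_nhds
    · filter_upwards [hev] with ρ hρ
      have : 0 < 1 - ρ ^ 2 := by nlinarith [hρ.1, hρ.2]
      exact Real.sqrt_pos.2 this
  -- the limit function
  set f : ℝ → ℝ := (Set.Iio u₂).indicator fun _ => (1:ℝ) with hf_def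
  have hfint : ∫ v in Set.Ioo (0:ℝ) u₁, f v = min u₁ u₂ := by
    rw [hf_def, setIntegral_indicator measurableSet_Iio, Set.Ioo_inter_Iio,
      setIntegral_const, Real.volume_real_Ioo_of_le (le_min h1.1.le h2.1.le), smul_eq_mul, mul_one,
      sub_zero]
  rw [← hfint]
  refine tendsto_integral_filter_of_dominated_convergence (fun _ => (1:ℝ)) ?_ ?_ ?_ ?_
  · -- measurability
    refine Filter.Eventually.of_forall fun ρ => ?_
    have houter : Continuous fun t : ℝ => Φ ((a - ρ * t) / Real.sqrt (1 - ρ ^ 2)) := by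
      fun_prop
    exact (houter.measurable.comp_aemeasurable hg_ae).aestronglyMeasurable
  · -- bound
    refine Filter.Eventually.of_forall fun ρ => Filter.Eventually.of_forall fun v => ?_
    have := hΦ01 ((a - ρ * g v) / Real.sqrt (1 - ρ ^ 2))
    rw [Real.norm_eq_abs, abs_le]
    constructor <;> linarith [this.1, this.2]
  · -- bound integrable
    refine integrableOn_const ?_
    rw [Real.volume_Ioo]
    exact ENNReal.ofReal_ne_top
  · -- a.e. pointwise convergence
    have hne : ∀ᵐ v ∂(volume.restrict (Set.Ioo (0:ℝ) u₁)), v ≠ u₂ := by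
      refine ae_restrict_of_ae ?_
      rw [ae_iff]
      simp [Real.volume_singleton]
    filter_upwards [ae_restrict_mem measurableSet_Ioo, hne] with v hv hvne
    have hΦb : Φ (g v) = v := hinv v (hsub hv)
    rcases lt_or_gt_of_ne hvne with hlt | hgt
    · -- v < u₂ : limit 1
      have hba : g v < a := by
        have := hmono.lt_iff_lt (a := g v) (b := a)
        rw [hΦb, hΦa] at this
        exact this.mp hlt
      have hfv : f v = 1 := Set.indicator_of_mem (Set.mem_Iio.mpr hlt) _
      rw [hfv]
      have hnum : Filter.Tendsto (fun ρ : ℝ => a - ρ * g v) (nhdsWithin 1 (Set.Iio 1))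
          (nhds (a - g v)) := by
        have : Filter.Tendsto (fun ρ : ℝ => a - ρ * g v) (nhds 1) (nhds (a - 1 * g v)) :=
          ((continuous_const.sub (continuous_id.mul continuous_const)).tendsto 1)
        rw [one_mul] at this
        exact this.mono_left nhdsWithin_le_nhds
      have harg : Filter.Tendsto (fun ρ : ℝ => (a - ρ * g v) / Real.sqrt (1 - ρ ^ 2))
          (nhdsWithin 1 (Set.Iio 1)) Filter.atTop := by
        simp only [div_eq_mul_inv]
        exact Filter.Tendsto.pos_mul_atTop (sub_pos.2 hba) hnum hden
      exact htop.comp harg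
    · -- u₂ < v : limit 0
      have hba : a < g v := by
        have := hmono.lt_iff_lt (a := a) (b := g v)
        rw [hΦb, hΦa] at this
        exact this.mp hgt
      have hfv : f v = 0 := Set.indicator_of_notMem (by simp [Set.mem_Iio, not_lt, hgt.le]) _
      rw [hfv]
      have hnum : Filter.Tendsto (fun ρ : ℝ => a - ρ * g v) (nhdsWithin 1 (Set.Iio 1))
          (nhds (a - g v)) := by
        have : Filter.Tendsto (fun ρ : ℝ => a - ρ * g v) (nhds 1) (nhds (a - 1 * g v)) :=
          ((continuous_const.sub (continuous_id.mul continuous_const)).tendsto 1)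
        rw [one_mul] at this
        exact this.mono_left nhdsWithin_le_nhds
      have harg : Filter.Tendsto (fun ρ : ℝ => (a - ρ * g v) / Real.sqrt (1 - ρ ^ 2))
          (nhdsWithin 1 (Set.Iio 1)) Filter.atBot := by
        simp only [div_eq_mul_inv]
        exact Filter.Tendsto.neg_mul_atTop (sub_neg.2 hba) hnum hden
      exact hbot.comp harg
end

section
/- For u₁, u₂ ∈ (0,1), the limit as ρ → -1⁺ of ∫₀^{u₁} F_Z((F_Z⁻¹(u₂) - ρ·F_Z⁻¹(v))/√(1-ρ²)) dv equals max(u₁ + u₂ - 1, 0). -/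
open MeasureTheory

/-- As ρ → -1⁺ the Gaussian-copula joint CDF tends to the countermonotone copula. -/
theorem stmt19 (φ Φ : ℝ → ℝ)
    (hφ : ∀ z, φ z = (1 / Real.sqrt (2 * Real.pi)) * Real.exp (-z ^ 2 / 2))
    (hΦ : ∀ x, Φ x = ∫ z in Set.Iic x, φ z)
    (u₁ u₂ : ℝ) (h1 : u₁ ∈ Set.Ioo (0:ℝ) 1) (h2 : u₂ ∈ Set.Ioo (0:ℝ) 1) :
    Filter.Tendsto
      (fun ρ : ℝ => ∫ v in Set.Ioo (0:ℝ) u₁,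
        Φ ((Function.invFun Φ u₂ - ρ * Function.invFun Φ v) / Real.sqrt (1 - ρ ^ 2)))
      (nhdsWithin (-1) (Set.Ioi (-1))) (nhds (max (u₁ + u₂ - 1) 0)) := by
  open Set Filter in
  obtain ⟨hu10, hu11⟩ := h1
  obtain ⟨hu20, hu21⟩ := h2
  -- basic facts about φ
  have hφg : φ = ProbabilityTheory.gaussianPDFReal 0 1 := by
    funext z
    rw [hφ, ProbabilityTheory.gaussianPDFReal]
    norm_num [one_div]
  have φpos : ∀ z, 0 < φ z := by
    intro z; rw [hφ]; positivity
  have φnn : ∀ z, 0 ≤ φ z := fun z => (φpos z).le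
  have φint : Integrable φ := by
    rw [hφg]; exact ProbabilityTheory.integrable_gaussianPDFReal 0 1
  have φtot : ∫ z, φ z = 1 := by
    rw [hφg]; exact ProbabilityTheory.integral_gaussianPDFReal_eq_one 0 one_ne_zero
  have φle1 : ∀ z, φ z ≤ 1 := by
    intro z
    rw [hφ]
    have h2π : (1:ℝ) ≤ Real.sqrt (2 * Real.pi) := by
      rw [show (1:ℝ) = Real.sqrt 1 by simp]
      apply Real.sqrt_le_sqrt
      nlinarith [Real.pi_gt_three]
    have he : Real.exp (-z ^ 2 / 2) ≤ 1 := by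
      rw [Real.exp_le_one_iff]
      nlinarith [sq_nonneg z]
    have h0 : (0:ℝ) < Real.sqrt (2 * Real.pi) := lt_of_lt_of_le one_pos h2π
    calc 1 / Real.sqrt (2 * Real.pi) * Real.exp (-z ^ 2 / 2)
        ≤ 1 / Real.sqrt (2 * Real.pi) * 1 := by
          apply mul_le_mul_of_nonneg_left he; positivity
      _ ≤ 1 := by rw [mul_one]; rw [div_le_one h0]; exact h2π
  -- Φ diff as interval integral
  have hdiff : ∀ x y : ℝ, Φ y - Φ x = ∫ z in x..y, φ z := by
    intro x y
    rw [hΦ, hΦ]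
    exact intervalIntegral.integral_Iic_sub_Iic φint.integrableOn φint.integrableOn
  have Φmono : StrictMono Φ := by
    intro x y hxy
    have h := hdiff x y
    have hpos : 0 < ∫ z in x..y, φ z :=
      intervalIntegral.intervalIntegral_pos_of_pos φint.intervalIntegrable φpos hxy
    linarith
  have Φcont : Continuous Φ := by
    have : LipschitzWith 1 Φ := by
      apply LipschitzWith.of_dist_le_mul
      intro x y
      rw [Real.dist_eq, Real.dist_eq, NNReal.coe_one, one_mul]
      have := hdiff y x
      have hb : ‖∫ z in y..x, φ z‖ ≤ 1 * |x - y| := by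
        apply intervalIntegral.norm_integral_le_of_norm_le_const
        intro z _
        rw [Real.norm_eq_abs, abs_of_nonneg (φnn z)]
        exact φle1 z
      rw [Real.norm_eq_abs] at hb
      calc |Φ x - Φ y| = |∫ z in y..x, φ z| := by rw [← this]
        _ ≤ 1 * |x - y| := hb
        _ = |x - y| := one_mul _
    exact this.continuous
  have Φnn : ∀ x, 0 ≤ Φ x := by
    intro x; rw [hΦ]
    exact setIntegral_nonneg measurableSet_Iic fun z _ => φnn z
  have Φle1 : ∀ x, Φ x ≤ 1 := by
    intro x; rw [hΦ, ← φtot]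
    exact setIntegral_le_integral φint (Filter.Eventually.of_forall φnn)
  -- limits at infinity
  have htop : Filter.Tendsto Φ Filter.atTop (nhds 1) := by
    have h := (MeasureTheory.aecover_Iic (μ := volume)
      (tendsto_id : Filter.Tendsto (id : ℝ → ℝ) Filter.atTop Filter.atTop)
      ).integral_tendsto_of_countably_generated φint
    rw [φtot] at h
    refine h.congr fun x => ?_
    rw [hΦ]; rfl
  have hbot : Filter.Tendsto Φ Filter.atBot (nhds 0) := by
    have h := (MeasureTheory.aecover_Ioi (μ := volume)
      (tendsto_id : Filter.Tendsto (id : ℝ → ℝ) Filter.atBot Filter.atBot)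
      ).integral_tendsto_of_countably_generated φint
    rw [φtot] at h
    have h2 : Filter.Tendsto (fun x : ℝ => 1 - ∫ z in Ioi x, φ z) Filter.atBot
        (nhds (1 - 1)) := Filter.Tendsto.sub tendsto_const_nhds h
    rw [sub_self] at h2
    refine h2.congr fun x => ?_
    rw [hΦ]
    have h3 := intervalIntegral.integral_Iic_add_Ioi (b := x) (μ := volume)
      φint.integrableOn φint.integrableOn
    rw [φtot] at h3
    linarith
  -- surjectivity onto (0,1)
  have hsurj : ∀ v ∈ Ioo (0:ℝ) 1, Φ (Function.invFun Φ v) = v := by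
    intro v hv
    apply Function.invFun_eq
    obtain ⟨x₁, hx₁⟩ := (htop.eventually (eventually_gt_nhds hv.2)).exists
    obtain ⟨x₀, hx₀⟩ := (hbot.eventually (eventually_lt_nhds hv.1)).exists
    have hle : x₀ ≤ x₁ := (Φmono.lt_iff_lt.mp (hx₀.trans hx₁)).le
    obtain ⟨x, _, hx⟩ := intermediate_value_Icc hle Φcont.continuousOn ⟨hx₀.le, hx₁.le⟩
    exact ⟨x, hx⟩
  -- symmetry Φ(-x) = 1 - Φ x
  have φeven : ∀ z, φ (-z) = φ z := by
    intro z; rw [hφ, hφ]; ring_nf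
  have Φneg : ∀ x, Φ (-x) = 1 - Φ x := by
    intro x
    have h1 : ∫ z in Iic (-x), φ z = ∫ z in Ioi x, φ z := by
      have h := integral_comp_neg_Iic (-x) φ
      rw [neg_neg] at h
      rw [← h]
      congr 1
      funext z
      exact (φeven z).symm
    have h2 : (∫ z in Iic x, φ z) + ∫ z in Ioi x, φ z = 1 := by
      rw [intervalIntegral.integral_Iic_add_Ioi φint.integrableOn φint.integrableOn, φtot]
    have h3 : ∫ z in Iic x, φ z = Φ x := (hΦ x).symm
    rw [hΦ, h1]
    linarith
  set a := Function.invFun Φ u₂ with ha_def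
  have ha : Φ a = u₂ := hsurj u₂ ⟨hu20, hu21⟩
  have hΦnega : Φ (-a) = 1 - u₂ := by rw [Φneg, ha]
  set l := nhdsWithin (-1 : ℝ) (Ioi (-1)) with hl_def
  -- denominator tendsto
  have hden : Filter.Tendsto (fun ρ : ℝ => Real.sqrt (1 - ρ ^ 2)) l (nhdsWithin 0 (Ioi 0)) := by
    rw [tendsto_nhdsWithin_iff]
    constructor
    · have hc : Continuous fun ρ : ℝ => Real.sqrt (1 - ρ ^ 2) :=
        Real.continuous_sqrt.comp (continuous_const.sub (continuous_pow 2))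
      have := (hc.tendsto (-1)).mono_left (nhdsWithin_le_nhds (s := Ioi (-1)))
      simpa using this
    · filter_upwards [Ioo_mem_nhdsGT_of_mem (by constructor <;> norm_num : (-1:ℝ) ∈ Ico (-1:ℝ) 1)] with ρ hρ
      have : ρ ^ 2 < 1 := by
        rw [sq_lt_one_iff_abs_lt_one, abs_lt]
        exact ⟨hρ.1, hρ.2⟩
      exact Real.sqrt_pos.mpr (by linarith)
  have hinv : Filter.Tendsto (fun ρ : ℝ => (Real.sqrt (1 - ρ ^ 2))⁻¹) l Filter.atTop :=
    hden.inv_tendsto_nhdsGT_zero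
  -- pointwise limits
  have hnum : ∀ b : ℝ, Filter.Tendsto (fun ρ : ℝ => a - ρ * b) l (nhds (a + b)) := by
    intro b
    have hc : Continuous fun ρ : ℝ => a - ρ * b :=
      continuous_const.sub (continuous_id.mul continuous_const)
    have := (hc.tendsto (-1)).mono_left (nhdsWithin_le_nhds (s := Ioi (-1)))
    simpa [sub_eq_add_neg] using this
  have hlim_pos : ∀ b : ℝ, 0 < a + b →
      Filter.Tendsto (fun ρ : ℝ => Φ ((a - ρ * b) / Real.sqrt (1 - ρ ^ 2))) l (nhds 1) := by
    intro b hab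
    have ht : Filter.Tendsto (fun ρ : ℝ => (a - ρ * b) / Real.sqrt (1 - ρ ^ 2)) l Filter.atTop := by
      simp_rw [div_eq_mul_inv]
      exact (hnum b).pos_mul_atTop hab hinv
    exact htop.comp ht
  have hlim_neg : ∀ b : ℝ, a + b < 0 →
      Filter.Tendsto (fun ρ : ℝ => Φ ((a - ρ * b) / Real.sqrt (1 - ρ ^ 2))) l (nhds 0) := by
    intro b hab
    have ht : Filter.Tendsto (fun ρ : ℝ => (a - ρ * b) / Real.sqrt (1 - ρ ^ 2)) l Filter.atBot := by
      simp_rw [div_eq_mul_inv]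
      exact (hnum b).neg_mul_atTop hab hinv
    exact hbot.comp ht
  -- the limit function and its integral
  have hkey : ∫ v in Ioo (0:ℝ) u₁, (Ioi (1 - u₂)).indicator (fun _ => (1:ℝ)) v
      = max (u₁ + u₂ - 1) 0 := by
    rw [MeasureTheory.integral_indicator measurableSet_Ioi]
    rw [Measure.restrict_restrict measurableSet_Ioi]
    have hset : Ioi (1 - u₂) ∩ Ioo (0:ℝ) u₁ = Ioo (1 - u₂) u₁ := by
      ext x
      simp only [mem_inter_iff, mem_Ioi, mem_Ioo]
      constructor
      · rintro ⟨h, _, h'⟩; exact ⟨h, h'⟩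
      · rintro ⟨h, h'⟩; exact ⟨h, by linarith, h'⟩
    rw [hset]
    simp only [integral_const, smul_eq_mul, mul_one]
    rw [measureReal_restrict_apply_univ, measureReal_def, Real.volume_Ioo, ENNReal.toReal_ofReal']
    congr 1
    ring
  rw [← hkey]
  -- dominated convergence
  apply MeasureTheory.tendsto_integral_filter_of_dominated_convergence (fun _ => (1:ℝ))
  · -- measurability
    apply Filter.Eventually.of_forall
    intro ρ
    have hg : AEMeasurable (Function.invFun Φ) (volume.restrict (Ioo (0:ℝ) u₁)) := by
      apply aemeasurable_restrict_of_monotoneOn measurableSet_Ioo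
      intro v hv w hw hvw
      rw [← Φmono.le_iff_le, hsurj v ⟨hv.1, hv.2.trans hu11⟩, hsurj w ⟨hw.1, hw.2.trans hu11⟩]
      exact hvw
    exact (Φcont.measurable.comp_aemeasurable
      (((aemeasurable_const.sub (hg.const_mul ρ)).div_const _))).aestronglyMeasurable
  · -- bound
    apply Filter.Eventually.of_forall
    intro ρ
    apply Filter.Eventually.of_forall
    intro v
    rw [Real.norm_eq_abs, abs_le]
    exact ⟨by linarith [Φnn ((a - ρ * Function.invFun Φ v) / Real.sqrt (1 - ρ ^ 2))],
      Φle1 _⟩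
  · -- integrable bound
    rw [MeasureTheory.integrable_const_iff]
    right
    refine isFiniteMeasure_restrict.mpr (ne_of_lt ?_)
    exact measure_Ioo_lt_top
  · -- a.e. pointwise convergence
    have hne : ∀ᵐ v ∂(volume.restrict (Ioo (0:ℝ) u₁)), v ≠ 1 - u₂ := by
      apply ae_restrict_of_ae
      rw [ae_iff]
      have : {v : ℝ | ¬ v ≠ 1 - u₂} = {1 - u₂} := by ext x; simp
      rw [this]
      exact measure_singleton _
    filter_upwards [MeasureTheory.ae_restrict_mem measurableSet_Ioo, hne] with v hv hvne
    have hv1 : v ∈ Ioo (0:ℝ) 1 := ⟨hv.1, hv.2.trans hu11⟩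
    have hb : Φ (Function.invFun Φ v) = v := hsurj v hv1
    rcases lt_or_gt_of_ne hvne with hlt | hgt
    · -- v < 1 - u₂ : limit 0
      have hind : (Ioi (1 - u₂)).indicator (fun _ => (1:ℝ)) v = 0 := by
        apply Set.indicator_of_notMem
        simp only [mem_Ioi, not_lt]
        exact hlt.le
      rw [hind]
      apply hlim_neg
      have : Φ (Function.invFun Φ v) < Φ (-a) := by rw [hb, hΦnega]; exact hlt
      have := Φmono.lt_iff_lt.mp this
      linarith
    · -- v > 1 - u₂ : limit 1
      have hind : (Ioi (1 - u₂)).indicator (fun _ => (1:ℝ)) v = 1 := by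
        apply Set.indicator_of_mem
        exact hgt
      rw [hind]
      apply hlim_pos
      have : Φ (-a) < Φ (Function.invFun Φ v) := by rw [hb, hΦnega]; exact hgt
      have := Φmono.lt_iff_lt.mp this
      linarith
end
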